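/- Let α, β > -1 and let φ_n^{α,β} denote the Jacobi function on (0,π). Let f(θ) = sign(θ)·|sin(θ/2)|^{-α-1/2}(cos(θ/2))^{-β-1/2} on (-π,π). If p ∈ E(α,β) and α, β < 1/p - 1/2, then f ∈ L^p(-π,π) and the Jacobi–Dunkl derivative 𝔻_{α,β}f = f' - ((2α+1)/4 cot(θ/2) - (2β+1)/4 tan(θ/2))·f̌ vanishes identically on (-π,π)\{0}, so that f belongs to the first-order 'naive' Sobolev space 𝒲^{p,1}_{α,β} = {f ∈ L^p : 𝔻_{α,β}f ∈ L^p}. -/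

import Mathlib

open MeasureTheory Set Real
open scoped ENNReal NNReal

/-- The upper endpoint `p(α,β)` of the interval `E(α,β)`. -/
noncomputable def pMaxJ (α β : ℝ) : ℝ≥0∞ :=
  if -(1 / 2 : ℝ) ≤ α ∧ -(1 / 2 : ℝ) ≤ β then ⊤
  else ENNReal.ofReal (-1 / min (α + 1 / 2) (β + 1 / 2))

/-- The lower endpoint `p'(α,β)` (conjugate exponent of `p(α,β)`). -/
noncomputable def pMinJ (α β : ℝ) : ℝ :=
  if -(1 / 2 : ℝ) ≤ α ∧ -(1 / 2 : ℝ) ≤ β then 1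
  else (pMaxJ α β).toReal / ((pMaxJ α β).toReal - 1)

/-- `p ∈ E(α,β) = (p'(α,β), p(α,β))`. -/
def memEJ (α β p : ℝ) : Prop := pMinJ α β < p ∧ ENNReal.ofReal p < pMaxJ α β

/-- The Jacobi–Dunkl derivative
`𝔻_{α,β}f(θ) = f'(θ) - ((2α+1)/4 cot(θ/2) - (2β+1)/4 tan(θ/2)) f(-θ)`. -/
noncomputable def jacobiDunkl (α β : ℝ) (f : ℝ → ℝ) (θ : ℝ) : ℝ :=
  deriv f θ - ((2 * α + 1) / 4 * (Real.cos (θ / 2) / Real.sin (θ / 2))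
    - (2 * β + 1) / 4 * Real.tan (θ / 2)) * f (-θ)

/- ### Auxiliary lemmas -/

lemma measurable_realSign : Measurable Real.sign := by
  unfold Real.sign
  exact Measurable.ite measurableSet_Iio measurable_const
    (Measurable.ite measurableSet_Ioi measurable_const measurable_const)

lemma one_le_pMinJ (α β : ℝ) (hα : -1 < α) (hβ : -1 < β) : 1 ≤ pMinJ α β := by
  unfold pMinJ pMaxJ
  by_cases h : -(1/2 : ℝ) ≤ α ∧ -(1/2 : ℝ) ≤ β
  · rw [if_pos h]
  · simp only [h, if_false]
    set m := min (α + 1/2) (β + 1/2) with hm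
    have hm0 : m < 0 := by
      rcases not_and_or.mp h with h' | h' <;> push_neg at h'
      · exact min_lt_of_left_lt (by linarith)
      · exact min_lt_of_right_lt (by linarith)
    have hm1 : -(1/2 : ℝ) < m := lt_min (by linarith) (by linarith)
    have hM2 : (2:ℝ) < -1/m := by
      rw [show (-1/m : ℝ) = 1/(-m) by ring, lt_div_iff₀ (by linarith : (0:ℝ) < -m)]
      linarith
    rw [ENNReal.toReal_ofReal (by linarith)]
    rw [le_div_iff₀ (by linarith : (0:ℝ) < -1/m - 1)]
    linarith

lemma hasDerivAt_aux (α β θ : ℝ) (hθ1 : 0 < θ) (hθ2 : θ < π) :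
    HasDerivAt (fun x : ℝ => Real.sign x * |Real.sin (x / 2)| ^ (-α - 1 / 2)
      * Real.cos (x / 2) ^ (-β - 1 / 2))
    (-((2*α+1)/4 * (Real.cos (θ/2) / Real.sin (θ/2)) - (2*β+1)/4 * Real.tan (θ/2)) *
      (Real.sin (θ/2) ^ (-α-1/2) * Real.cos (θ/2) ^ (-β-1/2))) θ := by
  have hs : 0 < Real.sin (θ/2) :=
    Real.sin_pos_of_pos_of_lt_pi (by linarith) (by linarith [Real.pi_pos])
  have hc : 0 < Real.cos (θ/2) :=
    Real.cos_pos_of_mem_Ioo ⟨by linarith [Real.pi_pos], by linarith⟩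
  have h1 : HasDerivAt (fun x : ℝ => Real.sin (x / 2)) (Real.cos (θ/2) * (1/2)) θ := by
    simpa [Function.comp_def] using (Real.hasDerivAt_sin (θ/2)).comp θ ((hasDerivAt_id θ).div_const 2)
  have h2 : HasDerivAt (fun x : ℝ => Real.cos (x / 2)) (-Real.sin (θ/2) * (1/2)) θ := by
    simpa [Function.comp_def] using (Real.hasDerivAt_cos (θ/2)).comp θ ((hasDerivAt_id θ).div_const 2)
  have h3 := (h1.rpow_const (p := -α - 1/2) (Or.inl hs.ne')).mul
    (h2.rpow_const (p := -β - 1/2) (Or.inl hc.ne'))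
  have heq : (fun x : ℝ => Real.sign x * |Real.sin (x / 2)| ^ (-α - 1 / 2)
      * Real.cos (x / 2) ^ (-β - 1 / 2)) =ᶠ[nhds θ]
      (fun x : ℝ => Real.sin (x / 2) ^ (-α - 1/2) * Real.cos (x / 2) ^ (-β - 1/2)) := by
    have : Ioo (0:ℝ) π ∈ nhds θ := isOpen_Ioo.mem_nhds ⟨hθ1, hθ2⟩
    filter_upwards [this] with x hx
    have hsx : 0 < Real.sin (x/2) :=
      Real.sin_pos_of_pos_of_lt_pi (by linarith [hx.1]) (by linarith [hx.2, Real.pi_pos])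
    rw [Real.sign_of_pos hx.1, abs_of_pos hsx, one_mul]
  refine HasDerivAt.congr_of_eventuallyEq ?_ heq
  refine h3.congr_deriv ?_
  rw [Real.tan_eq_sin_div_cos]
  have e1 : Real.sin (θ/2) ^ (-α - 1/2 - 1) = Real.sin (θ/2) ^ (-α - 1/2) / Real.sin (θ/2) := by
    rw [Real.rpow_sub hs, Real.rpow_one]
  have e2 : Real.cos (θ/2) ^ (-β - 1/2 - 1) = Real.cos (θ/2) ^ (-β - 1/2) / Real.cos (θ/2) := by
    rw [Real.rpow_sub hc, Real.rpow_one]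
  rw [e1, e2]
  field_simp
  ring

lemma H_intervalIntegrable {a b : ℝ} (ha : a < 1) (hb : b < 1) (ha0 : 0 ≤ a) (hb0 : 0 ≤ b) :
    IntervalIntegrable (fun θ : ℝ => θ ^ (-a) * (π - θ) ^ (-b)) volume 0 π := by
  have hπ := Real.pi_pos
  have piece1 : IntervalIntegrable (fun θ : ℝ => θ ^ (-a) * (π - θ) ^ (-b)) volume 0 (π/2) := by
    have base : IntervalIntegrable (fun x : ℝ => x ^ (-a)) volume 0 (π/2) :=
      intervalIntegral.intervalIntegrable_rpow' (by linarith)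
    rw [intervalIntegrable_iff_integrableOn_Ioc_of_le (by linarith)] at base ⊢
    refine Integrable.mono' (base.const_mul ((π/2) ^ (-b))) ?_ ?_
    · apply Measurable.aestronglyMeasurable
      fun_prop
    · refine (ae_restrict_iff' measurableSet_Ioc).mpr (ae_of_all _ fun θ hθ => ?_)
      have h1 : (0:ℝ) < θ := hθ.1
      have h2 : θ ≤ π/2 := hθ.2
      have h3 : (0:ℝ) < π/2 := by linarith
      have h4 : π/2 ≤ π - θ := by linarith
      have hx : (π - θ) ^ (-b) ≤ (π/2) ^ (-b) :=
        Real.rpow_le_rpow_of_nonpos h3 h4 (by linarith)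
      rw [Real.norm_eq_abs, abs_of_nonneg
        (mul_nonneg (Real.rpow_nonneg h1.le _) (Real.rpow_nonneg (by linarith) _))]
      calc θ ^ (-a) * (π - θ) ^ (-b) ≤ θ ^ (-a) * (π/2) ^ (-b) := by
            exact mul_le_mul_of_nonneg_left hx (by positivity)
        _ = (π/2) ^ (-b) * θ ^ (-a) := by ring
  have piece2 : IntervalIntegrable (fun θ : ℝ => θ ^ (-a) * (π - θ) ^ (-b)) volume (π/2) π := by
    have base0 : IntervalIntegrable (fun x : ℝ => x ^ (-b)) volume 0 (π/2) :=
      intervalIntegral.intervalIntegrable_rpow' (by linarith)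
    have base : IntervalIntegrable (fun x : ℝ => (π - x) ^ (-b)) volume (π/2) π := by
      have := (base0.comp_sub_left π)
      simpa [sub_zero, show π - π/2 = π/2 from by ring] using this.symm
    rw [intervalIntegrable_iff_integrableOn_Ioc_of_le (by linarith)] at base ⊢
    refine Integrable.mono' (base.const_mul ((π/2) ^ (-a))) ?_ ?_
    · apply Measurable.aestronglyMeasurable
      fun_prop
    · refine (ae_restrict_iff' measurableSet_Ioc).mpr (ae_of_all _ fun θ hθ => ?_)
      have h1 : π/2 < θ := hθ.1
      have h2 : θ ≤ π := hθ.2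
      have h3 : (0:ℝ) < π/2 := by linarith
      have hx : θ ^ (-a) ≤ (π/2) ^ (-a) :=
        Real.rpow_le_rpow_of_nonpos h3 (by linarith) (by linarith)
      rw [Real.norm_eq_abs, abs_of_nonneg
        (mul_nonneg (Real.rpow_nonneg (by linarith) _) (Real.rpow_nonneg (by linarith) _))]
      calc θ ^ (-a) * (π - θ) ^ (-b) ≤ (π/2) ^ (-a) * (π - θ) ^ (-b) := by
            refine mul_le_mul_of_nonneg_right hx ?_
            exact Real.rpow_nonneg (by linarith) _
        _ = (π/2) ^ (-a) * (π - θ) ^ (-b) := rfl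
  exact piece1.trans piece2

lemma f_abs_bound (α β p θ : ℝ) (hp : 0 < p) (hθ : θ ∈ Ioo (-π) π) :
    ‖Real.sign θ * |Real.sin (θ/2)| ^ (-α - 1/2) * Real.cos (θ/2) ^ (-β - 1/2)‖ ^ p
      ≤ π ^ (max (p*(α+1/2)) 0 + max (p*(β+1/2)) 0) *
        (|θ| ^ (-(max (p*(α+1/2)) 0)) * (π - |θ|) ^ (-(max (p*(β+1/2)) 0))) := by
  have hπ := Real.pi_pos
  set a := p*(α+1/2) with ha
  set b := p*(β+1/2) with hb
  set ma := max a 0 with hma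
  set mb := max b 0 with hmb
  have hma0 : 0 ≤ ma := le_max_right a 0
  have hmb0 : 0 ≤ mb := le_max_right b 0
  have hπθ : |θ| < π := abs_lt.mpr ⟨hθ.1, hθ.2⟩
  have hRHS0 : 0 ≤ π ^ (ma+mb) * (|θ| ^ (-ma) * (π - |θ|) ^ (-mb)) := by
    refine mul_nonneg (Real.rpow_nonneg hπ.le _)
      (mul_nonneg (Real.rpow_nonneg (abs_nonneg _) _) (Real.rpow_nonneg (by linarith) _))
  rcases eq_or_ne θ 0 with rfl | hθ0
  · rw [Real.sign_zero, zero_mul, zero_mul, norm_zero, Real.zero_rpow hp.ne']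
    exact hRHS0
  have habs : 0 < |θ| := abs_pos.mpr hθ0
  have hcos : 0 < Real.cos (θ/2) :=
    Real.cos_pos_of_mem_Ioo ⟨by linarith [hθ.1], by linarith [hθ.2]⟩
  have hsin_eq : |Real.sin (θ/2)| = Real.sin (|θ|/2) := by
    rcases le_or_gt 0 θ with h | h
    · rw [abs_of_nonneg h, abs_of_nonneg
        (Real.sin_nonneg_of_nonneg_of_le_pi (by linarith) (by linarith [hθ.2]))]
    · rw [abs_of_neg h]
      have hs : Real.sin (-θ/2) = -Real.sin (θ/2) := by rw [neg_div, Real.sin_neg]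
      have hns : 0 ≤ Real.sin (-θ/2) :=
        Real.sin_nonneg_of_nonneg_of_le_pi (by linarith) (by linarith [hθ.1])
      rw [abs_of_nonpos (by linarith), hs]
  have hsin_lb : |θ|/π ≤ |Real.sin (θ/2)| := by
    rw [hsin_eq]
    have := Real.mul_le_sin (x := |θ|/2) (by linarith) (by linarith)
    calc |θ|/π = 2/π * (|θ|/2) := by field_simp
      _ ≤ Real.sin (|θ|/2) := this
  have hcos_eq : Real.cos (θ/2) = Real.sin ((π - |θ|)/2) := by
    have : Real.cos (θ/2) = Real.cos (|θ|/2) := by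
      rw [show |θ|/2 = |θ/2| by rw [abs_div]; norm_num, Real.cos_abs]
    rw [this, show (π - |θ|)/2 = π/2 - |θ|/2 by ring, Real.sin_pi_div_two_sub]
  have hcos_lb : (π - |θ|)/π ≤ Real.cos (θ/2) := by
    rw [hcos_eq]
    have := Real.mul_le_sin (x := (π - |θ|)/2) (by linarith) (by linarith [abs_nonneg θ])
    calc (π - |θ|)/π = 2/π * ((π - |θ|)/2) := by field_simp
      _ ≤ Real.sin ((π - |θ|)/2) := this
  have hsinpos : 0 < |Real.sin (θ/2)| := lt_of_lt_of_le (by positivity) hsin_lb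
  have hsgn : |Real.sign θ| = 1 := by
    rcases lt_or_gt_of_ne hθ0 with h | h
    · rw [Real.sign_of_neg h]; norm_num
    · rw [Real.sign_of_pos h]; norm_num
  have hLHS : ‖Real.sign θ * |Real.sin (θ/2)| ^ (-α - 1/2) * Real.cos (θ/2) ^ (-β - 1/2)‖ ^ p
      = |Real.sin (θ/2)| ^ (-a) * Real.cos (θ/2) ^ (-b) := by
    rw [Real.norm_eq_abs, abs_mul, abs_mul, hsgn, one_mul,
      abs_of_nonneg (Real.rpow_nonneg (abs_nonneg _) _),
      abs_of_nonneg (Real.rpow_nonneg hcos.le _),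
      Real.mul_rpow (Real.rpow_nonneg (abs_nonneg _) _) (Real.rpow_nonneg hcos.le _),
      ← Real.rpow_mul (abs_nonneg _), ← Real.rpow_mul hcos.le]
    congr 1 <;> [congr 1; congr 1] <;> ring
  rw [hLHS]
  have bound1 : |Real.sin (θ/2)| ^ (-a) ≤ π ^ ma * |θ| ^ (-ma) := by
    rcases le_or_gt a 0 with h | h
    · rw [hma, max_eq_right h, Real.rpow_zero, neg_zero, Real.rpow_zero, mul_one]
      exact Real.rpow_le_one (abs_nonneg _)
        (abs_le.mpr ⟨Real.neg_one_le_sin _, Real.sin_le_one _⟩) (by linarith)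
    · rw [hma, max_eq_left h.le]
      have h1 : |Real.sin (θ/2)| ^ (-a) ≤ (|θ|/π) ^ (-a) :=
        Real.rpow_le_rpow_of_nonpos (by positivity) hsin_lb (by linarith)
      have h2 : (|θ|/π) ^ (-a) = π ^ a * |θ| ^ (-a) := by
        rw [Real.div_rpow (abs_nonneg _) hπ.le, Real.rpow_neg hπ.le]; field_simp
      rw [← h2]; exact h1
  have bound2 : Real.cos (θ/2) ^ (-b) ≤ π ^ mb * (π - |θ|) ^ (-mb) := by
    rcases le_or_gt b 0 with h | h
    · rw [hmb, max_eq_right h, Real.rpow_zero, neg_zero, Real.rpow_zero, mul_one]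
      exact Real.rpow_le_one hcos.le (Real.cos_le_one _) (by linarith)
    · rw [hmb, max_eq_left h.le]
      have hd : (0:ℝ) < (π - |θ|)/π := div_pos (by linarith) hπ
      have h1 : Real.cos (θ/2) ^ (-b) ≤ ((π - |θ|)/π) ^ (-b) :=
        Real.rpow_le_rpow_of_nonpos hd hcos_lb (by linarith)
      have h2 : ((π - |θ|)/π) ^ (-b) = π ^ b * (π - |θ|) ^ (-b) := by
        rw [Real.div_rpow (by linarith : (0:ℝ) ≤ π - |θ|) hπ.le, Real.rpow_neg hπ.le]
        field_simp
      rw [← h2]; exact h1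
  calc |Real.sin (θ/2)| ^ (-a) * Real.cos (θ/2) ^ (-b)
      ≤ (π ^ ma * |θ| ^ (-ma)) * (π ^ mb * (π - |θ|) ^ (-mb)) := by
        refine mul_le_mul bound1 bound2 (Real.rpow_nonneg hcos.le _) ?_
        exact mul_nonneg (Real.rpow_nonneg hπ.le _) (Real.rpow_nonneg (abs_nonneg _) _)
    _ = π ^ (ma+mb) * (|θ| ^ (-ma) * (π - |θ|) ^ (-mb)) := by
        rw [Real.rpow_add hπ]; ring

/-- Let `α, β > -1`, `p ∈ E(α,β)`, `α, β < 1/p - 1/2`, and let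
`f(θ) = sign(θ)|sin(θ/2)|^{-α-1/2}(cos(θ/2))^{-β-1/2}`.  Then `f ∈ L^p(-π,π)`, the
Jacobi–Dunkl derivative `𝔻_{α,β}f` vanishes on `(-π,π)\{0}`, and hence `f` lies in the
naive first-order Sobolev space `𝒲^{p,1}_{α,β}` (i.e. `𝔻_{α,β}f ∈ L^p(-π,π)` as well). -/
theorem stmt17 (α β p : ℝ) (hα : -1 < α) (hβ : -1 < β)
    (hp : memEJ α β p) (hαp : α < 1 / p - 1 / 2) (hβp : β < 1 / p - 1 / 2)
    (f : ℝ → ℝ)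
    (hf : f = fun θ => Real.sign θ * |Real.sin (θ / 2)| ^ (-α - 1 / 2)
      * Real.cos (θ / 2) ^ (-β - 1 / 2)) :
    MemLp f (ENNReal.ofReal p) (volume.restrict (Ioo (-π) π))
    ∧ (∀ θ ∈ Ioo (-π) π \ {0}, jacobiDunkl α β f θ = 0)
    ∧ MemLp (jacobiDunkl α β f) (ENNReal.ofReal p) (volume.restrict (Ioo (-π) π)) := by
  have hπ := Real.pi_pos
  have hp1 : 1 < p := lt_of_le_of_lt (one_le_pMinJ α β hα hβ) hp.1
  have hp0 : 0 < p := by linarith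
  subst hf
  set f : ℝ → ℝ := fun θ => Real.sign θ * |Real.sin (θ / 2)| ^ (-α - 1 / 2)
      * Real.cos (θ / 2) ^ (-β - 1 / 2) with hfdef
  -- oddness
  have hodd : ∀ x : ℝ, f (-x) = -f x := by
    intro x
    simp only [hfdef]
    rw [Real.sign_neg, show -x/2 = -(x/2) by ring, Real.sin_neg, Real.cos_neg, abs_neg]
    ring
  -- measurability
  have hmeas : Measurable f := by
    have h1 : Measurable fun θ : ℝ => |Real.sin (θ/2)| ^ (-α - 1/2) := by fun_prop
    have h2 : Measurable fun θ : ℝ => Real.cos (θ/2) ^ (-β - 1/2) := by fun_prop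
    exact (measurable_realSign.mul h1).mul h2
  -- part 1 : MemLp
  set q : ℝ≥0∞ := ENNReal.ofReal p with hq
  have hq0 : q ≠ 0 := by simp only [hq, ne_eq, ENNReal.ofReal_eq_zero, not_le]; linarith
  have hqt : q ≠ ⊤ := ENNReal.ofReal_ne_top
  have hqreal : q.toReal = p := ENNReal.toReal_ofReal hp0.le
  -- the exponents
  set a := p*(α+1/2) with ha
  set b := p*(β+1/2) with hb
  set ma := max a 0 with hma
  set mb := max b 0 with hmb
  have ha1 : a < 1 := by
    have h' : α + 1/2 < 1/p := by linarith
    calc a < p * (1/p) := by exact mul_lt_mul_of_pos_left h' hp0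
      _ = 1 := by field_simp
  have hb1 : b < 1 := by
    have h' : β + 1/2 < 1/p := by linarith
    calc b < p * (1/p) := by exact mul_lt_mul_of_pos_left h' hp0
      _ = 1 := by field_simp
  have hma1 : ma < 1 := max_lt ha1 one_pos
  have hmb1 : mb < 1 := max_lt hb1 one_pos
  have hma0 : 0 ≤ ma := le_max_right a 0
  have hmb0 : 0 ≤ mb := le_max_right b 0
  -- integrability of the majorant
  have HInt := H_intervalIntegrable hma1 hmb1 hma0 hmb0
  rw [intervalIntegrable_iff_integrableOn_Ioc_of_le hπ.le] at HInt
  have HIooPos : IntegrableOn (fun θ : ℝ => θ ^ (-ma) * (π - θ) ^ (-mb)) (Ioo 0 π) volume :=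
    HInt.mono_set Ioo_subset_Ioc_self
  have HNeg : IntegrableOn (fun θ : ℝ => (-θ) ^ (-ma) * (π - -θ) ^ (-mb))
      (Ioo (-π) 0) volume := by
    have h := ((IntervalIntegrable.iff_comp_neg enorm_ne_top).mp (H_intervalIntegrable hma1 hmb1 hma0 hmb0))
    rw [neg_zero] at h
    have h2 := h.symm
    rw [intervalIntegrable_iff_integrableOn_Ioc_of_le (by linarith)] at h2
    exact h2.mono_set Ioo_subset_Ioc_self
  -- the function θ ↦ ‖f θ‖ ^ p is integrable on (-π, π)
  have Fmeas : Measurable fun θ : ℝ => ‖f θ‖ ^ p := by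
    have := hmeas.norm
    fun_prop
  have keyPos : IntegrableOn (fun θ : ℝ => ‖f θ‖ ^ p) (Ioo 0 π) volume := by
    refine Integrable.mono' (HIooPos.const_mul (π ^ (ma+mb))) Fmeas.aestronglyMeasurable ?_
    refine (ae_restrict_iff' measurableSet_Ioo).mpr (ae_of_all _ fun θ hθ => ?_)
    rw [Real.norm_eq_abs, abs_of_nonneg (Real.rpow_nonneg (norm_nonneg _) _)]
    have := f_abs_bound α β p θ hp0 ⟨by linarith [hθ.1], hθ.2⟩
    rw [abs_of_pos hθ.1] at this
    exact this
  have keyNeg : IntegrableOn (fun θ : ℝ => ‖f θ‖ ^ p) (Ioo (-π) 0) volume := by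
    refine Integrable.mono' (HNeg.const_mul (π ^ (ma+mb))) Fmeas.aestronglyMeasurable ?_
    refine (ae_restrict_iff' measurableSet_Ioo).mpr (ae_of_all _ fun θ hθ => ?_)
    rw [Real.norm_eq_abs, abs_of_nonneg (Real.rpow_nonneg (norm_nonneg _) _)]
    have := f_abs_bound α β p θ hp0 ⟨hθ.1, by linarith [hθ.2]⟩
    rw [abs_of_neg hθ.2] at this
    exact this
  have keyIco : IntegrableOn (fun θ : ℝ => ‖f θ‖ ^ p) (Ico 0 π) volume :=
    (integrableOn_Ico_iff_integrableOn_Ioo).mpr keyPos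
  have key : IntegrableOn (fun θ : ℝ => ‖f θ‖ ^ p) (Ioo (-π) π) volume := by
    refine (keyNeg.union keyIco).mono_set fun x hx => ?_
    rcases lt_or_ge x 0 with h | h
    · exact Or.inl ⟨hx.1, h⟩
    · exact Or.inr ⟨h, hx.2⟩
  have hmemf : MemLp f q (volume.restrict (Ioo (-π) π)) := by
    refine (memLp_norm_rpow_iff hmeas.aestronglyMeasurable hq0 hqt).mp ?_
    rw [ENNReal.div_self hq0 hqt, memLp_one_iff_integrable, hqreal]
    exact key
  -- part 2 : vanishing of the Jacobi–Dunkl derivative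
  have hvanish : ∀ θ ∈ Ioo (-π) π \ {0}, jacobiDunkl α β f θ = 0 := by
    rintro θ ⟨hθ, hθ0⟩
    simp only [mem_singleton_iff] at hθ0
    rcases lt_or_gt_of_ne hθ0 with hneg | hpos
    · -- θ < 0 ; use the derivative at -θ and oddness
      have ht1 : 0 < -θ := by linarith
      have ht2 : -θ < π := by linarith [hθ.1]
      have hd := hasDerivAt_aux α β (-θ) ht1 ht2
      set D : ℝ := -((2*α+1)/4 * (Real.cos (-θ/2) / Real.sin (-θ/2))
          - (2*β+1)/4 * Real.tan (-θ/2)) *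
          (Real.sin (-θ/2) ^ (-α-1/2) * Real.cos (-θ/2) ^ (-β-1/2)) with hD
      have h := (hd.comp θ (hasDerivAt_neg θ)).neg
      have h2 : HasDerivAt f (-(D * -1)) θ :=
        h.congr_of_eventuallyEq (Filter.Eventually.of_forall fun x => by
          show f x = -(f (-x))
          rw [hodd x]
          ring)
      have hcomp : HasDerivAt f D θ := by convert h2 using 1; ring
      have hs : 0 < Real.sin (-θ/2) := by
        rw [show -θ/2 = (-θ)/2 by ring]
        exact Real.sin_pos_of_pos_of_lt_pi (by linarith) (by linarith)
      have hfneg : f (-θ) = Real.sin (-θ/2) ^ (-α-1/2) * Real.cos (-θ/2) ^ (-β-1/2) := by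
        simp only [hfdef]
        rw [Real.sign_of_pos ht1, abs_of_pos (by rw [show (-θ)/2 = -θ/2 by ring]; exact hs),
          one_mul]
      unfold jacobiDunkl
      rw [hcomp.deriv, hfneg, hD]
      rw [show θ/2 = -(-θ/2) by ring, Real.sin_neg, Real.cos_neg, Real.tan_neg]
      ring
    · -- θ > 0
      have hd := hasDerivAt_aux α β θ hpos hθ.2
      have hs : 0 < Real.sin (θ/2) :=
        Real.sin_pos_of_pos_of_lt_pi (by linarith) (by linarith [hθ.2])
      have hfneg : f (-θ) = -(Real.sin (θ/2) ^ (-α-1/2) * Real.cos (θ/2) ^ (-β-1/2)) := by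
        rw [hodd]
        simp only [hfdef]
        rw [Real.sign_of_pos hpos, abs_of_pos hs, one_mul]
      unfold jacobiDunkl
      rw [hd.deriv, hfneg]
      ring
  refine ⟨hmemf, hvanish, ?_⟩
  -- part 3 : the derivative is a.e. zero, hence in L^p
  have hae : (fun θ => (0:ℝ)) =ᵐ[volume.restrict (Ioo (-π) π)] jacobiDunkl α β f := by
    have h0 : ∀ᵐ θ : ℝ ∂volume, θ ≠ 0 := by
      rw [ae_iff]
      have : {θ : ℝ | ¬θ ≠ 0} = {0} := by ext x; simp
      rw [this]
      exact measure_singleton 0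
    filter_upwards [ae_restrict_mem measurableSet_Ioo, ae_restrict_of_ae h0] with θ h1 h2
    exact (hvanish θ ⟨h1, h2⟩).symm
  exact (MemLp.zero : MemLp (fun _ => (0:ℝ)) q (volume.restrict (Ioo (-π) π))).ae_eq hae
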